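/- Let P_n denote the path graph on n ≥ 1 vertices (vertices 1, …, n with i adjacent to i+1 for 1 ≤ i ≤ n−1). Then rt(P_n) ≤ n; that is, every permutation of the vertices of P_n can be realized by at most n routing rounds. -/

import Mathlib

/-- A routing round on `G`: the swap permutation of a matching of `G`, i.e. an involution
of the vertices that moves vertices only along edges of `G`. -/
def isRound {V : Type*} (G : SimpleGraph V) (σ : Equiv.Perm V) : Prop :=
  σ * σ = 1 ∧ ∀ v : V, σ v ≠ v → G.Adj v (σ v)

/-- Composition, in order, of a list of round permutations: for `L = [σ₁, …, σₘ]`,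
`rComp L = σₘ ∘ ⋯ ∘ σ₁`. -/
def rComp {V : Type*} (L : List (Equiv.Perm V)) : Equiv.Perm V :=
  L.foldl (fun p σ => σ * p) 1

/-- `rt(G, π)`: the minimum number of routing rounds (matchings of `G`) whose swap
permutations, composed in order, realize the permutation `π`. -/
noncomputable def rtP {V : Type*} (G : SimpleGraph V) (π : Equiv.Perm V) : ℕ :=
  sInf {m | ∃ L : List (Equiv.Perm V), L.length = m ∧ (∀ σ ∈ L, isRound G σ) ∧ rComp L = π}

/-- `rt(G)`: the routing number of `G`, the maximum of `rt(G, π)` over all permutations. -/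
noncomputable def rt {V : Type*} [Fintype V] [DecidableEq V] (G : SimpleGraph V) : ℕ :=
  Finset.univ.sup (rtP G)


namespace RtPath

def pr (n p j : ℕ) : Prop := j % 2 = p % 2 ∧ j + 1 < n
def pl (n p j : ℕ) : Prop := ¬ (j % 2 = p % 2) ∧ 1 ≤ j ∧ j < n

instance (n p j : ℕ) : Decidable (pr n p j) := by unfold pr; infer_instance
instance (n p j : ℕ) : Decidable (pl n p j) := by unfold pl; infer_instance

variable {α : Type*} [LinearOrder α]

def cstep (n p : ℕ) (A : ℕ → α) : ℕ → α := fun j =>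
  if pr n p j then min (A j) (A (j+1))
  else if pl n p j then max (A (j-1)) (A j)
  else A j


lemma comp_cstep {β : Type*} [LinearOrder β] (g : α → β) (hg : Monotone g) (n p : ℕ) (A : ℕ → α) :
    g ∘ cstep n p A = cstep n p (g ∘ A) := by
  funext j
  simp only [Function.comp, cstep]
  split_ifs with h1 h2 <;> simp [hg.map_min, hg.map_max]

def run (n : ℕ) (A : ℕ → α) : ℕ → (ℕ → α)
  | 0 => A
  | t+1 => cstep n t (run n A t)

lemma comp_run {β : Type*} [LinearOrder β] (g : α → β) (hg : Monotone g) (n : ℕ) (A : ℕ → α) (t : ℕ) :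
    g ∘ run n A t = run n (g ∘ A) t := by
  induction t with
  | zero => rfl
  | succ t ih => rw [run, run, ← ih, comp_cstep g hg]

def cnt (n : ℕ) (B : ℕ → Bool) (k : ℕ) : ℕ :=
  ((Finset.Ico k n).filter (fun i => B i = true)).card

lemma bmin : ∀ a b : Bool, min a b = (a && b) := by decide
lemma bmax : ∀ a b : Bool, max a b = (a || b) := by decide

lemma cnt_of_ge (n : ℕ) (B : ℕ → Bool) {k : ℕ} (h : n ≤ k) : cnt n B k = 0 := by
  simp [cnt, Finset.Ico_eq_empty (by omega : ¬ k < n)]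

lemma cnt_succ (n : ℕ) (B : ℕ → Bool) {k : ℕ} (h : k < n) :
    cnt n B k = cnt n B (k+1) + (if B k = true then 1 else 0) := by
  unfold cnt
  rw [← Finset.insert_Ico_add_one_left_eq_Ico h, Finset.filter_insert]
  split_ifs with hb
  · rw [Finset.card_insert_of_notMem (by simp)]
  · simp

lemma cnt_le (n : ℕ) (B : ℕ → Bool) (k : ℕ) : cnt n B k ≤ n - k := by
  calc cnt n B k ≤ (Finset.Ico k n).card := Finset.card_filter_le _ _
  _ = n - k := Nat.card_Ico k n

def cross (n p : ℕ) (B : ℕ → Bool) (k : ℕ) : ℕ :=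
  if 1 ≤ k ∧ pr n p (k-1) ∧ B (k-1) = true ∧ B k = false then 1 else 0

lemma localid (n p k : ℕ) (hk : k < n) (B : ℕ → Bool) :
    (if cstep n p B k = true then 1 else 0) + cross n p B (k+1)
      = (if B k = true then 1 else 0) + cross n p B k := by
  simp only [cstep, cross, bmin, bmax, Nat.add_sub_cancel, pr, pl]
  split_ifs <;> simp_all <;> omega

lemma cnt_cstep (n p : ℕ) (B : ℕ → Bool) (k : ℕ) :
    cnt n (cstep n p B) k = cnt n B k + cross n p B k := by
  rcases Nat.lt_or_ge k n with hk | hk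
  · suffices H : ∀ d k, k < n → n - k ≤ d → cnt n (cstep n p B) k = cnt n B k + cross n p B k from
      H (n - k) k hk le_rfl
    intro d
    induction d with
    | zero => intro k hk hd; omega
    | succ d ih =>
      intro k hk hd
      have hrec : cnt n (cstep n p B) (k+1) = cnt n B (k+1) + cross n p B (k+1) := by
        rcases Nat.lt_or_ge (k+1) n with hk1 | hk1
        · exact ih (k+1) hk1 (by omega)
        · rw [cnt_of_ge n _ hk1, cnt_of_ge n _ hk1]
          have h2 : cross n p B (k+1) = 0 := by
            unfold cross pr
            rw [if_neg]; rintro ⟨-, ⟨-, h⟩, -⟩; omega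
          omega
      rw [cnt_succ n _ hk, cnt_succ n B hk, hrec]
      have := localid n p k hk B
      omega
  · rw [cnt_of_ge n _ hk, cnt_of_ge n _ hk]
    have h1 : cross n p B k = 0 := by
      unfold cross pr
      rw [if_neg]; rintro ⟨-, ⟨-, h⟩, -⟩; omega
    omega
def solid (n : ℕ) (B : ℕ → Bool) (j : ℕ) : Prop := ∀ i, j ≤ i → i < n → B i = true

lemma solid_cstep (n p : ℕ) (B : ℕ → Bool) (j : ℕ) (hs : solid n B j) :
    solid n (cstep n p B) j := by
  intro i hji hin
  unfold cstep
  split_ifs with h1 h2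
  · rw [bmin, hs i hji hin, hs (i+1) (by omega) h1.2]; rfl
  · rw [bmax, hs i hji hin, Bool.or_true]
  · exact hs i hji hin

lemma solid_of_mem (n : ℕ) (B : ℕ → Bool) (j : ℕ) (hB : B j = true)
    (hs : solid n B (j+1)) : solid n B j := by
  intro i hji hin
  rcases Nat.eq_or_lt_of_le hji with rfl | hlt
  · exact hB
  · exact hs i (by omega) hin

def Inv (n t : ℕ) (B : ℕ → Bool) : Prop := ∀ j, j < n → B j = true →
  solid n B j ∨ (t ≤ j + cnt n B (j+1) + 1 ∧ (cnt n B (j+1) + 1 ≤ t → j % 2 = t % 2))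

lemma cross_succ_of_not_pr (n t : ℕ) (B : ℕ → Bool) (j : ℕ) (h : ¬ pr n t j) :
    cross n t B (j+1) = 0 := by
  unfold cross
  rw [if_neg]
  rintro ⟨-, hpr, -⟩
  simp only [Nat.add_sub_cancel] at hpr
  exact h hpr

lemma inv_step (n t : ℕ) (B : ℕ → Bool) (h : Inv n t B) : Inv n (t+1) (cstep n t B) := by
  intro j hj hBj
  by_cases hpr : pr n t j
  · -- comparator (j, j+1) active
    have hmin : min (B j) (B (j+1)) = true := by
      rw [cstep, if_pos hpr] at hBj; exact hBj
    rw [bmin, Bool.and_eq_true] at hmin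
    obtain ⟨hj1, hj2⟩ := hmin
    have hcross : cross n t B (j+1) = 0 := by
      unfold cross
      rw [if_neg]
      rintro ⟨-, -, -, hfalse⟩
      rw [hj2] at hfalse; exact Bool.noConfusion hfalse
    have hrk' : cnt n (cstep n t B) (j+1) = cnt n B (j+1) := by
      rw [cnt_cstep, hcross]
      omega
    rcases h (j+1) hpr.2 hj2 with hs | ⟨h1', h2'⟩
    · exact Or.inl (solid_cstep n t B j (solid_of_mem n B j hj1 hs))
    · have hrel : cnt n B (j+1) = cnt n B (j+2) + 1 := by
        rw [cnt_succ n B hpr.2, if_pos hj2]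
      have hge : t + 1 ≤ cnt n B (j+1) := by
        by_contra hc
        have : cnt n B (j+2) + 1 ≤ t := by omega
        have := h2' this
        have := hpr.1
        omega
      refine Or.inr ⟨by omega, fun hc => by omega⟩
  · by_cases hpl : pl n t j
    · -- comparator (j-1, j) active
      have hmax : max (B (j-1)) (B j) = true := by
        rw [cstep, if_neg hpr, if_pos hpl] at hBj; exact hBj
      rw [bmax, Bool.or_eq_true] at hmax
      have hrk' : cnt n (cstep n t B) (j+1) = cnt n B (j+1) := by
        rw [cnt_cstep, cross_succ_of_not_pr n t B j hpr]
        omega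
      have hpar : j % 2 = (t+1) % 2 := by
        have := hpl.1; omega
      by_cases hBjt : B j = true
      · rcases h j hj hBjt with hs | ⟨h1, h2⟩
        · exact Or.inl (solid_cstep n t B j hs)
        · rcases le_or_gt (cnt n B (j+1) + 1) t with hle | hlt
          · exact absurd (h2 hle) hpl.1
          · exact Or.inr ⟨by omega, fun _ => hpar⟩
      · have hBj1 : B (j-1) = true := by
          rcases hmax with h' | h'
          · exact h'
          · exact absurd h' hBjt
        have hj1 : 1 ≤ j := hpl.2.1
        have hrko : cnt n B j = cnt n B (j+1) := by
          rw [cnt_succ n B hj, if_neg hBjt]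
          omega
        rcases h (j-1) (by omega) hBj1 with hs | ⟨h1o, -⟩
        · exact absurd (hs j (by omega) hj) hBjt
        · have : j - 1 + 1 = j := by omega
          rw [this, hrko] at h1o
          exact Or.inr ⟨by omega, fun _ => hpar⟩
    · -- no comparator at j
      have hBj' : B j = true := by
        rw [cstep, if_neg hpr, if_neg hpl] at hBj; exact hBj
      have hrk' : cnt n (cstep n t B) (j+1) = cnt n B (j+1) := by
        rw [cnt_cstep, cross_succ_of_not_pr n t B j hpr]
        omega
      by_cases hpar : j % 2 = t % 2
      · have hend : ¬ (j + 1 < n) := fun hc => hpr ⟨hpar, hc⟩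
        have hs : solid n B j := by
          intro i hi hin
          have : i = j := by omega
          rw [this]; exact hBj'
        exact Or.inl (solid_cstep n t B j hs)
      · have hj0 : j = 0 := by
          by_contra hc
          exact hpl ⟨hpar, by omega, hj⟩
        rcases h j hj hBj' with hs | ⟨h1, h2⟩
        · exact Or.inl (solid_cstep n t B j hs)
        · rcases le_or_gt (cnt n B (j+1) + 1) t with hle | hlt
          · exact absurd (h2 hle) hpar
          · exact Or.inr ⟨by omega, fun _ => by omega⟩

lemma inv_run (n : ℕ) (A : ℕ → Bool) (t : ℕ) : Inv n t (run n A t) := by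
  induction t with
  | zero => exact fun j hj hBj => Or.inr ⟨by omega, by omega⟩
  | succ t ih => exact inv_step n t _ ih

lemma sorted01 (n : ℕ) (A : ℕ → Bool) {j : ℕ} (hj : j + 1 < n)
    (hB : run n A n j = true) : run n A n (j+1) = true := by
  rcases inv_run n A n j (by omega) hB with hs | ⟨h1, -⟩
  · exact hs (j+1) (by omega) hj
  · have hle := cnt_le n (run n A n) (j+1)
    have hcard : ((Finset.Ico (j+1) n).filter (fun i => run n A n i = true)).card
        = (Finset.Ico (j+1) n).card := by
      have h2 : (Finset.Ico (j+1) n).card = n - (j+1) := Nat.card_Ico _ _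
      have : cnt n (run n A n) (j+1) = n - (j+1) := by
        unfold cnt at h1 hle ⊢; omega
      rw [h2, ← this]; rfl
    exact Finset.filter_card_eq hcard (j+1) (Finset.mem_Ico.mpr ⟨le_rfl, hj⟩)

lemma sorted_run (n : ℕ) (A : ℕ → ℕ) {j : ℕ} (hj : j + 1 < n) :
    run n A n j ≤ run n A n (j+1) := by
  by_contra hlt
  push_neg at hlt
  set c := run n A n (j+1) with hc
  have hg : Monotone (fun x : ℕ => decide (c < x)) := by
    intro a b hab
    by_cases h : c < a
    · have : c < b := lt_of_lt_of_le h hab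
      simp [h, this]
    · simp [h]
  have hcomm := comp_run (fun x : ℕ => decide (c < x)) hg n A n
  have h1 : run n ((fun x : ℕ => decide (c < x)) ∘ A) n j = true := by
    rw [← hcomm]
    simp only [Function.comp_apply]
    simp [hlt]
  have h2 := sorted01 n ((fun x : ℕ => decide (c < x)) ∘ A) hj h1
  rw [← hcomm] at h2
  simp only [Function.comp_apply] at h2
  simp at h2
  exact absurd h2 (lt_irrefl _)
def mfun (n p : ℕ) (K : ℕ → ℕ) : ℕ → ℕ := fun j =>
  if pr n p j ∧ K (j+1) < K j then j+1
  else if pl n p j ∧ K j < K (j-1) then j-1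
  else j

lemma mfun_lt (n p : ℕ) (K : ℕ → ℕ) {j : ℕ} (h : j < n) : mfun n p K j < n := by
  unfold mfun
  split_ifs with h1 h2
  · exact h1.1.2
  · omega
  · exact h

lemma mfun_invol (n p : ℕ) (K : ℕ → ℕ) (j : ℕ) : mfun n p K (mfun n p K j) = j := by
  unfold mfun
  by_cases h1 : pr n p j ∧ K (j+1) < K j
  · rw [if_pos h1]
    have hA : ¬ (pr n p (j+1) ∧ K (j+1+1) < K (j+1)) := by
      rintro ⟨⟨hp, -⟩, -⟩
      have := h1.1.1
      omega
    rw [if_neg hA, if_pos ⟨⟨by have := h1.1.1; omega, by omega, h1.1.2⟩,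
      by simpa using h1.2⟩]
    omega
  · rw [if_neg h1]
    by_cases h2 : pl n p j ∧ K j < K (j-1)
    · rw [if_pos h2]
      have hj1 : 1 ≤ j := h2.1.2.1
      have hpr : pr n p (j-1) ∧ K (j-1+1) < K (j-1) := by
        refine ⟨⟨by have := h2.1.1; omega, by have := h2.1.2.2; omega⟩, ?_⟩
        have hjj : j - 1 + 1 = j := by omega
        rw [hjj]
        exact h2.2
      rw [if_pos hpr]
      omega
    · rw [if_neg h2, if_neg h1, if_neg h2]

lemma key_cstep (n p : ℕ) (K : ℕ → ℕ) (j : ℕ) :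
    K (mfun n p K j) = cstep n p K j := by
  unfold mfun cstep
  by_cases hpr : pr n p j
  · have hnpl : ¬ pl n p j := fun hc => hc.1 hpr.1
    rw [if_pos hpr]
    by_cases hlt : K (j+1) < K j
    · rw [if_pos ⟨hpr, hlt⟩, min_eq_right (le_of_lt hlt)]
    · rw [if_neg (fun hc : _ ∧ _ => hlt hc.2), if_neg (fun hc : _ ∧ _ => hnpl hc.1),
        min_eq_left (by omega)]
  · rw [if_neg hpr, if_neg (fun hc : _ ∧ _ => hpr hc.1)]
    by_cases hpl : pl n p j
    · rw [if_pos hpl]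
      by_cases hlt : K j < K (j-1)
      · rw [if_pos ⟨hpl, hlt⟩, max_eq_left (le_of_lt hlt)]
      · rw [if_neg (fun hc : _ ∧ _ => hlt hc.2), max_eq_right (by omega)]
    · rw [if_neg hpl, if_neg (fun hc : _ ∧ _ => hpl hc.1)]

def mperm (n p : ℕ) (K : ℕ → ℕ) : Equiv.Perm (Fin n) :=
  Function.Involutive.toPerm
    (fun j => ⟨mfun n p K j.val, mfun_lt n p K j.isLt⟩)
    (fun j => Fin.ext (mfun_invol n p K j.val))

lemma mperm_apply (n p : ℕ) (K : ℕ → ℕ) (v : Fin n) :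
    (mperm n p K v : ℕ) = mfun n p K v.val := rfl

lemma mperm_invol (n p : ℕ) (K : ℕ → ℕ) (v : Fin n) :
    mperm n p K (mperm n p K v) = v := Fin.ext (mfun_invol n p K v.val)

lemma mperm_mul_self (n p : ℕ) (K : ℕ → ℕ) : mperm n p K * mperm n p K = 1 := by
  ext v
  rw [Equiv.Perm.mul_apply, mperm_invol, Equiv.Perm.one_apply]

lemma mperm_inv (n p : ℕ) (K : ℕ → ℕ) : (mperm n p K)⁻¹ = mperm n p K := by
  rw [inv_eq_iff_mul_eq_one, mperm_mul_self]

lemma isRound_mperm (n p : ℕ) (K : ℕ → ℕ) :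
    isRound (SimpleGraph.pathGraph n) (mperm n p K) := by
  refine ⟨mperm_mul_self n p K, ?_⟩
  intro v hv
  rw [SimpleGraph.pathGraph_adj]
  have hval : (mperm n p K v : ℕ) = mfun n p K v.val := rfl
  have hne : mfun n p K v.val ≠ v.val := fun hc => hv (Fin.ext (by rw [hval, hc]))
  rw [hval]
  unfold mfun at hne ⊢
  split_ifs at hne ⊢ with h1 h2
  · left; rfl
  · right
    have := h2.1.2.1
    omega
  · exact absurd rfl hne
def A0 (n : ℕ) (π : Equiv.Perm (Fin n)) : ℕ → ℕ := fun j =>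
  if h : j < n then (π ⟨j, h⟩ : ℕ) else j

def sig (n : ℕ) (π : Equiv.Perm (Fin n)) : ℕ → Equiv.Perm (Fin n)
  | 0 => 1
  | t+1 => mperm n t (run n (A0 n π) t) * sig n π t

lemma run_eq_sig (n : ℕ) (π : Equiv.Perm (Fin n)) :
    ∀ t j (h : j < n), run n (A0 n π) t j = ((π ((sig n π t)⁻¹ ⟨j, h⟩)) : ℕ) := by
  intro t
  induction t with
  | zero =>
    intro j h
    simp [run, A0, sig, dif_pos h]
  | succ t ih =>
    intro j h
    have hstep : run n (A0 n π) (t+1) j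
        = run n (A0 n π) t (mfun n t (run n (A0 n π) t) j) := by
      rw [run]; exact (key_cstep n t _ j).symm
    have hm : mfun n t (run n (A0 n π) t) j < n := mfun_lt n t _ h
    rw [hstep, ih _ hm]
    have h2 : (sig n π (t+1))⁻¹ ⟨j, h⟩
        = (sig n π t)⁻¹ (mperm n t (run n (A0 n π) t) ⟨j, h⟩) := by
      show (mperm n t (run n (A0 n π) t) * sig n π t)⁻¹ ⟨j, h⟩ = _
      rw [mul_inv_rev, mperm_inv, Equiv.Perm.mul_apply]
    have h3 : mperm n t (run n (A0 n π) t) ⟨j, h⟩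
        = ⟨mfun n t (run n (A0 n π) t) j, hm⟩ := Fin.ext rfl
    rw [h2, h3]

lemma le_apply_of_strictMono {n : ℕ} (f : Fin n → Fin n) (hf : StrictMono f)
    (v : Fin n) : v ≤ f v := by
  suffices H : ∀ k (v : Fin n), v.val ≤ k → v.val ≤ (f v).val from
    Fin.le_def.mpr (H v.val v le_rfl)
  intro k
  induction k with
  | zero => intro v hv; omega
  | succ k ih =>
    intro v hv
    rcases Nat.lt_or_ge v.val (k+1) with hlt | hge
    · exact ih v (by omega)
    · have hv1 : 1 ≤ v.val := by omega
      have hwlt : v.val - 1 < n := by omega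
      have h1 := ih ⟨v.val - 1, hwlt⟩ (by simp only [Fin.val_mk]; omega)
      have h2 := hf (show (⟨v.val - 1, hwlt⟩ : Fin n) < v by
        rw [Fin.lt_def]; simp only [Fin.val_mk]; omega)
      rw [Fin.lt_def] at h2
      simp only [Fin.val_mk] at h1 h2
      omega

lemma sig_eq (n : ℕ) (π : Equiv.Perm (Fin n)) : sig n π n = π := by
  set B := run n (A0 n π) n with hB
  set e : Fin n → Fin n := fun v => π ((sig n π n)⁻¹ v) with he
  have heval : ∀ v : Fin n, ((e v : Fin n) : ℕ) = B v.val :=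
    fun v => (run_eq_sig n π n v.val v.isLt).symm
  have hmono_aux : ∀ d j, j + d < n → B j ≤ B (j + d) := by
    intro d
    induction d with
    | zero => intro j h; exact le_rfl
    | succ d ih =>
      intro j h
      exact le_trans (ih j (by omega)) (sorted_run n (A0 n π) (by omega))
  have hmono : Monotone e := by
    intro a b hab
    rw [Fin.le_def] at hab ⊢
    have hj : a.val + (b.val - a.val) = b.val := by omega
    have := hmono_aux (b.val - a.val) a.val (by omega)
    rw [hj] at this
    calc ((e a) : ℕ) = B a.val := heval a
    _ ≤ B b.val := this
    _ = ((e b) : ℕ) := (heval b).symm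
  have hinj : Function.Injective e := by
    intro a b hab
    exact (Equiv.injective _) (π.injective hab)
  have hsm : StrictMono e := hmono.strictMono_of_injective hinj
  have hid : ∀ v, e v = v := by
    set e' : Fin n → Fin n := fun v => (sig n π n) (π⁻¹ v) with he'
    have he'e : ∀ v, e' (e v) = v := by
      intro v; simp [he, he']
    have hsm' : StrictMono e' := by
      intro a b hab
      rcases lt_trichotomy (e' a) (e' b) with h | h | h
      · exact h
      · exfalso
        have : e (e' a) = e (e' b) := by rw [h]
        simp [he, he'] at this
        exact absurd this (ne_of_lt hab)
      · exfalso
        have := hsm h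
        simp [he, he'] at this
        exact absurd hab (not_lt_of_gt this)
    intro v
    have ha : v ≤ e v := le_apply_of_strictMono e hsm v
    have hb : e v ≤ v := by
      have := le_apply_of_strictMono e' hsm' (e v)
      rwa [he'e v] at this
    exact le_antisymm hb ha
  ext v
  have h3 : π ((sig n π n)⁻¹ (sig n π n v)) = sig n π n v := hid _
  rw [Equiv.Perm.inv_def, Equiv.symm_apply_apply] at h3
  exact congrArg Fin.val h3.symm

lemma rComp_eq_sig (n : ℕ) (π : Equiv.Perm (Fin n)) (m : ℕ) :
    rComp ((List.range m).map (fun t => mperm n t (run n (A0 n π) t))) = sig n π m := by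
  induction m with
  | zero => rfl
  | succ m ih =>
    simp only [rComp] at ih ⊢
    rw [List.range_succ, List.map_append, List.map_cons, List.map_nil,
      List.foldl_append, List.foldl_cons, List.foldl_nil, ih]
    rfl

end RtPath

/-- The routing number of the path graph on `n ≥ 1` vertices is at most `n`. -/
theorem rt_pathGraph_le (n : ℕ) (hn : 1 ≤ n) : rt (SimpleGraph.pathGraph n) ≤ n := by
  unfold rt
  apply Finset.sup_le
  intro π _
  unfold rtP
  apply Nat.sInf_le
  refine ⟨(List.range n).map (fun t => RtPath.mperm n t (RtPath.run n (RtPath.A0 n π) t)),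
    by simp, ?_, ?_⟩
  · intro σ hσ
    simp only [List.mem_map, List.mem_range] at hσ
    obtain ⟨t, -, rfl⟩ := hσ
    exact RtPath.isRound_mperm n t _
  · rw [RtPath.rComp_eq_sig, RtPath.sig_eq]
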